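/- Let (Ω, 𝓕, P) be a probability space and λ > 0. Let (Xₙ) and (Yₙ) be sequences of square-integrable real random variables with Xₙ ≥ 0 almost surely and Yₙ ≥ λ² almost surely for all n. Suppose Var(Xₙ) → 0 and Var(Yₙ) → 0 as n → ∞, and that the sequences of means (E[Xₙ]) and (E[Yₙ]) are bounded. Then E[Xₙ/Yₙ] − E[Xₙ]/E[Yₙ] → 0 as n → ∞. (The zeroth-order approximation E[X/Y] ≈ E[X]/E[Y] is asymptotically exact as the variances vanish.) -/

import Mathlib

open MeasureTheory

open ProbabilityTheory in
lemma integral_abs_le_sqrt_integral_sq {Ω : Type*} [MeasurableSpace Ω] (P : Measure Ω)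
    [IsProbabilityMeasure P] {Z : Ω → ℝ} (hZ : MemLp Z 2 P) :
    ∫ ω, |Z ω| ∂P ≤ Real.sqrt (∫ ω, (Z ω) ^ 2 ∂P) := by
  have h2 : ENNReal.ofReal (2:ℝ) = 2 := by norm_num
  have habs : MemLp (fun ω => |Z ω|) (ENNReal.ofReal 2) P := by
    rw [h2]; simpa [Real.norm_eq_abs] using hZ.norm
  have h := integral_mul_le_Lp_mul_Lq_of_nonneg (μ := P)
      (p := 2) (q := 2) (by constructor <;> norm_num)
      (f := fun ω => |Z ω|) (g := fun _ => (1:ℝ))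
      (Filter.Eventually.of_forall fun ω => abs_nonneg _)
      (Filter.Eventually.of_forall fun _ => zero_le_one)
      habs (by rw [h2]; exact memLp_const 1)
  simp only [mul_one, Real.rpow_two, Real.one_rpow, integral_const, measure_univ,
    ENNReal.toReal_one, probReal_univ, one_smul, sq_abs, one_pow] at h
  rw [Real.sqrt_eq_rpow]
  exact h

open ProbabilityTheory in
lemma integral_abs_sub_mean_le_sqrt_variance {Ω : Type*} [MeasurableSpace Ω] (P : Measure Ω)
    [IsProbabilityMeasure P] {Z : Ω → ℝ} (hZ : MemLp Z 2 P) :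
    ∫ ω, |Z ω - ∫ ω', Z ω' ∂P| ∂P ≤ Real.sqrt (ProbabilityTheory.variance Z P) := by
  have h := integral_abs_le_sqrt_integral_sq P (hZ.sub (memLp_const (∫ ω', Z ω' ∂P)))
  rw [variance_eq_integral hZ.aemeasurable]
  simpa only [Pi.pow_apply, Pi.sub_apply] using h

/-- The zeroth-order approximation `E[X/Y] ≈ E[X]/E[Y]` is asymptotically exact
as the variances vanish: if `Xₙ ≥ 0` a.s., `Yₙ ≥ λ²` a.s. with `λ > 0`, the
`Xₙ, Yₙ` are square-integrable with variances tending to `0` and bounded means,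
then `E[Xₙ/Yₙ] − E[Xₙ]/E[Yₙ] → 0`. -/
theorem mean_ratio_approx_asymptotically_exact
    {Ω : Type*} [MeasurableSpace Ω] (P : Measure Ω) [IsProbabilityMeasure P]
    (lam : ℝ) (hlam : 0 < lam) (X Y : ℕ → Ω → ℝ)
    (hX2 : ∀ n, MemLp (X n) 2 P) (hY2 : ∀ n, MemLp (Y n) 2 P)
    (hX0 : ∀ n, ∀ᵐ ω ∂P, 0 ≤ X n ω) (hY0 : ∀ n, ∀ᵐ ω ∂P, lam ^ 2 ≤ Y n ω)
    (hVarX : Filter.Tendsto (fun n => ProbabilityTheory.variance (X n) P)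
      Filter.atTop (nhds 0))
    (hVarY : Filter.Tendsto (fun n => ProbabilityTheory.variance (Y n) P)
      Filter.atTop (nhds 0))
    (hEX : ∃ C : ℝ, ∀ n, |∫ ω, X n ω ∂P| ≤ C)
    (hEY : ∃ C : ℝ, ∀ n, |∫ ω, Y n ω ∂P| ≤ C) :
    Filter.Tendsto
      (fun n => (∫ ω, X n ω / Y n ω ∂P) - (∫ ω, X n ω ∂P) / (∫ ω, Y n ω ∂P))
      Filter.atTop (nhds 0) := by
  obtain ⟨CX, hCX⟩ := hEX
  obtain ⟨CY, hCY⟩ := hEY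
  have hlam2 : (0:ℝ) < lam ^ 2 := by positivity
  have hlam4 : (0:ℝ) < lam ^ 4 := by positivity
  have hXint : ∀ n, Integrable (X n) P := fun n => (hX2 n).integrable one_le_two
  have hYint : ∀ n, Integrable (Y n) P := fun n => (hY2 n).integrable one_le_two
  set a : ℕ → ℝ := fun n => ∫ ω, X n ω ∂P with ha
  set b : ℕ → ℝ := fun n => ∫ ω, Y n ω ∂P with hb
  have hbn : ∀ n, lam ^ 2 ≤ b n := by
    intro n
    calc lam ^ 2 = ∫ _, (lam ^ 2 : ℝ) ∂P := by simp
      _ ≤ b n := integral_mono_ae (integrable_const _) (hYint n) (hY0 n)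
  -- integrability of the ratio
  have hRint : ∀ n, Integrable (fun ω => X n ω / Y n ω) P := by
    intro n
    refine ((hXint n).const_mul ((lam ^ 2)⁻¹)).mono
      ((hX2 n).aestronglyMeasurable.aemeasurable.div (hY2 n).aestronglyMeasurable.aemeasurable).aestronglyMeasurable ?_
    filter_upwards [hX0 n, hY0 n] with ω hx hy
    rw [Real.norm_eq_abs, Real.norm_eq_abs,
      abs_of_nonneg (div_nonneg hx (hlam2.le.trans hy)),
      abs_of_nonneg (mul_nonneg (inv_nonneg.mpr hlam2.le) hx)]
    calc X n ω / Y n ω = (Y n ω)⁻¹ * X n ω := by rw [div_eq_inv_mul]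
      _ ≤ (lam ^ 2)⁻¹ * X n ω := mul_le_mul_of_nonneg_right (inv_anti₀ hlam2 hy) hx
  -- the key pointwise-in-n bound
  have key : ∀ n, |(∫ ω, X n ω / Y n ω ∂P) - a n / b n| ≤
      (lam ^ 4)⁻¹ * (CY * Real.sqrt (ProbabilityTheory.variance (X n) P) + CX * Real.sqrt (ProbabilityTheory.variance (Y n) P)) := by
    intro n
    have hbne : b n ≠ 0 := (hlam2.trans_le (hbn n)).ne'
    have hIa : Integrable (fun ω => |b n| * |X n ω - a n|) P :=
      (((hXint n).sub (integrable_const (a n))).abs.const_mul _)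
    have hIb : Integrable (fun ω => |a n| * |Y n ω - b n|) P :=
      (((hYint n).sub (integrable_const (b n))).abs.const_mul _)
    have step1 : (∫ ω, X n ω / Y n ω ∂P) - a n / b n
        = ∫ ω, (X n ω / Y n ω - a n / b n) ∂P := by
      rw [integral_sub (hRint n) (integrable_const _), integral_const, probReal_univ,
        one_smul]
    rw [step1]
    have step2 : |∫ ω, (X n ω / Y n ω - a n / b n) ∂P|
        ≤ ∫ ω, |X n ω / Y n ω - a n / b n| ∂P := by
      simpa [Real.norm_eq_abs] using
        norm_integral_le_integral_norm (μ := P) (fun ω => X n ω / Y n ω - a n / b n)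
    refine step2.trans ?_
    have step3 : ∫ ω, |X n ω / Y n ω - a n / b n| ∂P
        ≤ ∫ ω, (lam ^ 4)⁻¹ * (|b n| * |X n ω - a n| + |a n| * |Y n ω - b n|) ∂P := by
      refine integral_mono_ae ((hRint n).sub (integrable_const _)).abs
        ((hIa.add hIb).const_mul _) ?_
      filter_upwards [hX0 n, hY0 n] with ω hx hy
      have hYpos : (0:ℝ) < Y n ω := hlam2.trans_le hy
      have hprod : lam ^ 4 ≤ Y n ω * b n := by
        calc lam ^ 4 = lam ^ 2 * lam ^ 2 := by ring
          _ ≤ Y n ω * b n := mul_le_mul hy (hbn n) hlam2.le hYpos.le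
      rw [div_sub_div _ _ hYpos.ne' hbne, abs_div,
        abs_of_pos (hlam4.trans_le hprod), div_eq_inv_mul]
      have h1 : (Y n ω * b n)⁻¹ ≤ (lam ^ 4)⁻¹ := by
        exact inv_anti₀ hlam4 hprod
      have h2 : |X n ω * b n - Y n ω * a n| ≤ |b n| * |X n ω - a n| + |a n| * |Y n ω - b n| := by
        have : X n ω * b n - Y n ω * a n = b n * (X n ω - a n) - a n * (Y n ω - b n) := by ring
        rw [this]
        exact (abs_sub _ _).trans (by rw [abs_mul, abs_mul])
      exact mul_le_mul h1 h2 (abs_nonneg _) (inv_nonneg.mpr hlam4.le)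
    refine step3.trans ?_
    rw [integral_const_mul, integral_add hIa hIb, integral_const_mul, integral_const_mul]
    have hA : ∫ ω, |X n ω - a n| ∂P ≤ Real.sqrt (ProbabilityTheory.variance (X n) P) :=
      integral_abs_sub_mean_le_sqrt_variance P (hX2 n)
    have hB : ∫ ω, |Y n ω - b n| ∂P ≤ Real.sqrt (ProbabilityTheory.variance (Y n) P) :=
      integral_abs_sub_mean_le_sqrt_variance P (hY2 n)
    have h1 : |b n| * ∫ ω, |X n ω - a n| ∂P ≤ CY * Real.sqrt (ProbabilityTheory.variance (X n) P) :=
      mul_le_mul (hCY n) hA (integral_nonneg fun ω => abs_nonneg _)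
        ((abs_nonneg _).trans (hCY n))
    have h2 : |a n| * ∫ ω, |Y n ω - b n| ∂P ≤ CX * Real.sqrt (ProbabilityTheory.variance (Y n) P) :=
      mul_le_mul (hCX n) hB (integral_nonneg fun ω => abs_nonneg _)
        ((abs_nonneg _).trans (hCX n))
    exact mul_le_mul_of_nonneg_left (add_le_add h1 h2) (inv_nonneg.mpr hlam4.le)
  refine squeeze_zero_norm key ?_
  have hsq : Filter.Tendsto (fun x : ℝ => Real.sqrt x) (nhds 0) (nhds 0) := by
    simpa using (Real.continuous_sqrt.tendsto 0)
  have hX' := hsq.comp hVarX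
  have hY' := hsq.comp hVarY
  have := (((hX'.const_mul CY).add (hY'.const_mul CX)).const_mul ((lam ^ 4)⁻¹))
  simpa using this
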